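/- Let N ≥ 1, let τ_{j,N} = -cos(jπ/N) for j = 0, ..., N be the Chebyshev points of the second kind, set ρ_0 = ρ_N = 2 and ρ_j = 1 for 1 ≤ j ≤ N-1, and let ℓ_{j,N}^τ be the Lagrange basis polynomials associated with these points. Let T_k denote the k-th Chebyshev polynomial of the first kind. Then for every j = 0, ..., N and all real x, ℓ_{j,N}^τ(x) = (1/(ρ_j N))·T_0(x) + Σ_{k=1}^{N-1} (2T_k(τ_{j,N})/(ρ_j N))·T_k(x) + ((-1)^{N-j}/(ρ_j N))·T_N(x). -/

import Mathlib

open Polynomial Polynomial.Chebyshev Real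

private lemma natDegree_T_le : ∀ n : ℕ, (T ℝ (n : ℤ)).natDegree ≤ n
  | 0 => by simp [T_zero]
  | 1 => by simp [T_one]
  | (n+2) => by
      have h1 := natDegree_T_le (n+1)
      have h0 := natDegree_T_le n
      have hc : ((n + 2 : ℕ) : ℤ) = (n : ℤ) + 2 := by push_cast; ring
      rw [hc, T_add_two]
      refine (natDegree_sub_le _ _).trans (max_le ?_ (h0.trans (by omega)))
      refine natDegree_mul_le.trans ?_
      have h2X : (2 * X : ℝ[X]).natDegree ≤ 1 := natDegree_mul_le.trans (by simp)
      have : ((n+1 : ℕ) : ℤ) = (n : ℤ) + 1 := by push_cast; ring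
      rw [this] at h1
      omega

lemma cos_nat_pi (n : ℕ) : Real.cos ((n : ℝ) * π) = (-1 : ℝ) ^ n := by
  simpa using Real.cos_nat_mul_pi_sub 0 n

lemma sum_cos_eq (N : ℕ) (hN : 1 ≤ N) (m : ℤ) :
    (1 + Real.cos ((m : ℝ) * π)) / 2
      + ∑ k ∈ Finset.Icc 1 (N - 1), Real.cos ((k : ℝ) * ((m : ℝ) * π / N))
    = if (2 * (N : ℤ)) ∣ m then (N : ℝ) else 0 := by
  have hN0 : (N : ℝ) ≠ 0 := Nat.cast_ne_zero.mpr (by omega)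
  have hπ : π ≠ 0 := Real.pi_ne_zero
  by_cases hdvd : (2 * (N : ℤ)) ∣ m
  · obtain ⟨t, rfl⟩ := hdvd
    rw [if_pos ⟨t, rfl⟩]
    have h1 : ∀ k ∈ Finset.Icc 1 (N-1),
        Real.cos ((k:ℝ) * (((2 * (N:ℤ) * t : ℤ) : ℝ) * π / N)) = 1 := by
      intro k _
      have : (k:ℝ) * (((2 * (N:ℤ) * t : ℤ) : ℝ) * π / N) = (((k : ℤ) * t : ℤ) : ℝ) * (2 * π) := by
        push_cast; field_simp
      rw [this, Real.cos_int_mul_two_pi]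
    rw [Finset.sum_congr rfl h1]
    have h2 : Real.cos (((2 * (N:ℤ) * t : ℤ) : ℝ) * π) = 1 := by
      have : ((2 * (N:ℤ) * t : ℤ) : ℝ) * π = (((N:ℤ) * t : ℤ) : ℝ) * (2 * π) := by push_cast; ring
      rw [this, Real.cos_int_mul_two_pi]
    rw [h2, Finset.sum_const, Nat.card_Icc]
    have : ((N - 1 + 1 - 1 : ℕ) : ℝ) = (N : ℝ) - 1 := by
      have : N - 1 + 1 - 1 = N - 1 := by omega
      rw [this, Nat.cast_sub hN]; norm_num
    rw [nsmul_eq_mul, this]; ring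
  · rw [if_neg hdvd]
    set θ : ℝ := (m : ℝ) * π / N with hθ
    have hsin : Real.sin (θ / 2) ≠ 0 := by
      intro h
      obtain ⟨n, hn⟩ := Real.sin_eq_zero_iff.mp h
      apply hdvd
      refine ⟨n, ?_⟩
      rw [hθ] at hn
      field_simp at hn
      have h2 : ((2 * (N:ℤ) * n : ℤ) : ℝ) * π = (m : ℝ) * π := by push_cast; rw [← hn]; ring
      have := mul_right_cancel₀ hπ h2
      exact_mod_cast this.symm
    have key : ∀ k : ℕ, Real.sin (((k:ℝ)+1) * θ - θ/2) - Real.sin ((k:ℝ) * θ - θ/2)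
        = 2 * Real.sin (θ/2) * Real.cos ((k:ℝ) * θ) := by
      intro k
      rw [Real.sin_sub_sin]
      ring_nf
    have tele := Finset.sum_range_sub (fun k : ℕ => Real.sin ((k:ℝ) * θ - θ/2)) N
    have tele2 : ∑ k ∈ Finset.range N, (2 * Real.sin (θ/2) * Real.cos ((k:ℝ) * θ))
        = Real.sin ((N:ℝ) * θ - θ/2) + Real.sin (θ/2) := by
      have hc : ∀ k ∈ Finset.range N, 2 * Real.sin (θ/2) * Real.cos ((k:ℝ) * θ)
          = Real.sin (((k+1 : ℕ):ℝ) * θ - θ/2) - Real.sin ((k:ℝ) * θ - θ/2) := by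
        intro k _
        push_cast
        exact (key k).symm
      rw [Finset.sum_congr rfl hc, tele]
      simp
    have hNθ : (N:ℝ) * θ = (m:ℝ) * π := by rw [hθ]; field_simp
    have hsinN : Real.sin ((N:ℝ) * θ - θ/2) = -(Real.cos ((m:ℝ)*π) * Real.sin (θ/2)) := by
      rw [hNθ, Real.sin_sub]
      rw [show (m:ℝ) * π = ((m:ℤ):ℝ) * π by push_cast; ring, Real.sin_int_mul_pi]
      push_cast
      ring
    have hsin0 : Real.sin ((0:ℝ) * θ - θ/2) = -Real.sin (θ/2) := by
      rw [zero_mul, zero_sub, Real.sin_neg]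
    have hsum : ∑ k ∈ Finset.range N, Real.cos ((k:ℝ) * θ) = (1 - Real.cos ((m:ℝ)*π)) / 2 := by
      have h2s : (2:ℝ) * Real.sin (θ/2) ≠ 0 := mul_ne_zero two_ne_zero hsin
      apply mul_left_cancel₀ h2s
      rw [Finset.mul_sum, tele2, hsinN]
      ring
    have hins : Finset.range N = insert 0 (Finset.Icc 1 (N-1)) := by
      ext k
      simp only [Finset.mem_range, Finset.mem_insert, Finset.mem_Icc]
      omega
    have h0 : (0:ℕ) ∉ Finset.Icc 1 (N-1) := by simp
    rw [hins, Finset.sum_insert h0] at hsum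
    simp only [Nat.cast_zero, zero_mul, Real.cos_zero] at hsum
    linarith

lemma ortho (N : ℕ) (hN : 1 ≤ N) (a b : ℕ) (ha : a ≤ N) (hb : b ≤ N) :
    1 + (-1 : ℝ) ^ (a + b)
      + 2 * ∑ k ∈ Finset.Icc 1 (N - 1),
          Real.cos ((k:ℝ) * ((a:ℝ) * π / N)) * Real.cos ((k:ℝ) * ((b:ℝ) * π / N))
    = if a = b then (if a = 0 ∨ a = N then 2 * (N:ℝ) else (N:ℝ)) else 0 := by
  have hterm : ∀ k ∈ Finset.Icc 1 (N-1),
      2 * (Real.cos ((k:ℝ) * ((a:ℝ) * π / N)) * Real.cos ((k:ℝ) * ((b:ℝ) * π / N)))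
      = Real.cos ((k:ℝ) * ((((a:ℤ)+(b:ℤ) : ℤ):ℝ) * π / N))
        + Real.cos ((k:ℝ) * ((((a:ℤ)-(b:ℤ) : ℤ):ℝ) * π / N)) := by
    intro k _
    have h1 : (k:ℝ) * ((((a:ℤ)+(b:ℤ) : ℤ):ℝ) * π / N)
        = (k:ℝ) * ((a:ℝ) * π / N) + (k:ℝ) * ((b:ℝ) * π / N) := by push_cast; ring
    have h2 : (k:ℝ) * ((((a:ℤ)-(b:ℤ) : ℤ):ℝ) * π / N)
        = (k:ℝ) * ((a:ℝ) * π / N) - (k:ℝ) * ((b:ℝ) * π / N) := by push_cast; ring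
    rw [h1, h2, Real.cos_add, Real.cos_sub]; ring
  have hsplit : 2 * ∑ k ∈ Finset.Icc 1 (N-1),
          Real.cos ((k:ℝ) * ((a:ℝ) * π / N)) * Real.cos ((k:ℝ) * ((b:ℝ) * π / N))
      = (∑ k ∈ Finset.Icc 1 (N-1), Real.cos ((k:ℝ) * ((((a:ℤ)+(b:ℤ) : ℤ):ℝ) * π / N)))
        + ∑ k ∈ Finset.Icc 1 (N-1), Real.cos ((k:ℝ) * ((((a:ℤ)-(b:ℤ) : ℤ):ℝ) * π / N)) := by
    rw [Finset.mul_sum, Finset.sum_congr rfl hterm, Finset.sum_add_distrib]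
  -- cos((a+b)π) = (-1)^(a+b), cos((a-b)π) = (-1)^(a+b)
  have hcplus : Real.cos ((((a:ℤ)+(b:ℤ) : ℤ):ℝ) * π) = (-1:ℝ)^(a+b) := by
    push_cast
    rw [show ((a:ℝ)+(b:ℝ)) * π = (((a+b : ℕ)):ℝ) * π by push_cast; ring, cos_nat_pi, pow_add]
  have hcminus : Real.cos ((((a:ℤ)-(b:ℤ) : ℤ):ℝ) * π) = (-1:ℝ)^(a+b) := by
    push_cast
    rw [show ((a:ℝ)-(b:ℝ)) * π = (a:ℝ)*π - (b:ℝ)*π by ring, Real.cos_sub,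
      show (b:ℝ)*π = (b:ℝ)*π - 0 by ring]
    rw [show Real.sin ((a:ℝ)*π) = 0 by
      rw [show (a:ℝ)*π = ((a:ℤ):ℝ)*π by push_cast; ring]; exact Real.sin_int_mul_pi a]
    rw [show (b:ℝ)*π - 0 = (b:ℝ)*π by ring, cos_nat_pi a, cos_nat_pi b, pow_add]
    ring
  have G1 := sum_cos_eq N hN ((a:ℤ)+(b:ℤ))
  have G2 := sum_cos_eq N hN ((a:ℤ)-(b:ℤ))
  rw [hcplus] at G1
  rw [hcminus] at G2
  have hmain : 1 + (-1 : ℝ) ^ (a + b)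
      + 2 * ∑ k ∈ Finset.Icc 1 (N-1),
          Real.cos ((k:ℝ) * ((a:ℝ) * π / N)) * Real.cos ((k:ℝ) * ((b:ℝ) * π / N))
      = (if (2 * (N : ℤ)) ∣ ((a:ℤ)+(b:ℤ)) then (N:ℝ) else 0)
        + (if (2 * (N : ℤ)) ∣ ((a:ℤ)-(b:ℤ)) then (N:ℝ) else 0) := by
    rw [hsplit, ← G1, ← G2]; ring
  rw [hmain]
  by_cases hab : a = b
  · subst hab
    rw [if_pos rfl]
    have hd2 : (2 * (N : ℤ)) ∣ ((a:ℤ)-(a:ℤ)) := by simp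
    rw [if_pos hd2]
    by_cases h0 : a = 0 ∨ a = N
    · rw [if_pos h0]
      have : (2 * (N : ℤ)) ∣ ((a:ℤ)+(a:ℤ)) := by
        rcases h0 with h | h <;> subst h <;> simp [two_mul] <;> ring_nf
      rw [if_pos this]; ring
    · rw [if_neg h0]
      push_neg at h0
      have : ¬ (2 * (N : ℤ)) ∣ ((a:ℤ)+(a:ℤ)) := by
        intro ⟨t, ht⟩
        have hN1 : (1:ℤ) ≤ (N:ℤ) := by exact_mod_cast hN
        have ha1 : (1:ℤ) ≤ (a:ℤ) := by exact_mod_cast (show 1 ≤ a by omega)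
        have ha2 : (a:ℤ) < (N:ℤ) := by exact_mod_cast lt_of_le_of_ne ha h0.2
        rcases le_or_gt t 0 with htt | htt
        · nlinarith
        · nlinarith
      rw [if_neg this]; ring
  · rw [if_neg hab]
    have hN1 : (1:ℤ) ≤ (N:ℤ) := by exact_mod_cast hN
    have haN : (a:ℤ) ≤ (N:ℤ) := by exact_mod_cast ha
    have hbN : (b:ℤ) ≤ (N:ℤ) := by exact_mod_cast hb
    have habz : (a:ℤ) ≠ (b:ℤ) := by exact_mod_cast hab
    have h1 : ¬ (2 * (N : ℤ)) ∣ ((a:ℤ)-(b:ℤ)) := by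
      intro ⟨t, ht⟩
      rcases lt_trichotomy t 0 with htt | htt | htt
      · nlinarith
      · subst htt; simp at ht; omega
      · nlinarith
    have h2 : ¬ (2 * (N : ℤ)) ∣ ((a:ℤ)+(b:ℤ)) := by
      intro ⟨t, ht⟩
      have hab1 : 1 ≤ (a:ℤ)+(b:ℤ) := by omega
      have hab2 : (a:ℤ)+(b:ℤ) ≤ 2*(N:ℤ) - 1 := by omega
      rcases le_or_gt t 0 with htt | htt
      · nlinarith
      · nlinarith
    rw [if_neg h1, if_neg h2]; ring

/-- Chebyshev expansion of the Lagrange basis polynomials associated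
with the Chebyshev points of the second kind. -/
theorem stmt_15 (N : ℕ) (hN : 1 ≤ N) (τ : Fin (N + 1) → ℝ)
    (hτ : ∀ j, τ j = -Real.cos ((j : ℝ) * π / (N : ℝ)))
    (ρ : Fin (N + 1) → ℝ)
    (hρ0 : ρ 0 = 2) (hρN : ρ (Fin.last N) = 2)
    (hρ : ∀ j : Fin (N + 1), 1 ≤ (j : ℕ) → (j : ℕ) ≤ N - 1 → ρ j = 1)
    (ℓ : Fin (N + 1) → Polynomial ℝ)
    (hdeg : ∀ j, (ℓ j).natDegree ≤ N)
    (hval : ∀ i j, (ℓ j).eval (τ i) = if i = j then 1 else 0)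
    (j : Fin (N + 1)) (x : ℝ) :
    (ℓ j).eval x =
      (1 / (ρ j * N)) * (Polynomial.Chebyshev.T ℝ 0).eval x +
        (∑ k ∈ Finset.Icc 1 (N - 1),
          (2 * (Polynomial.Chebyshev.T ℝ (k : ℤ)).eval (τ j) / (ρ j * N)) *
            (Polynomial.Chebyshev.T ℝ (k : ℤ)).eval x) +
        ((-1 : ℝ) ^ (N - (j : ℕ)) / (ρ j * N)) *
          (Polynomial.Chebyshev.T ℝ (N : ℤ)).eval x := by
  have hNR : (0:ℝ) < N := by exact_mod_cast hN
  have hjN : (j:ℕ) ≤ N := Nat.lt_succ_iff.mp j.isLt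
  have hρj : ρ j = if (j:ℕ) = 0 ∨ (j:ℕ) = N then 2 else 1 := by
    by_cases h : (j:ℕ) = 0 ∨ (j:ℕ) = N
    · rw [if_pos h]
      rcases h with h | h
      · have : j = 0 := by ext; simpa using h
        rw [this, hρ0]
      · have : j = Fin.last N := by ext; simpa using h
        rw [this, hρN]
    · rw [if_neg h]
      push_neg at h
      exact hρ j (by omega) (by omega)
  have hρpos : 0 < ρ j := by rw [hρj]; split <;> norm_num
  have hd : ρ j * (N:ℝ) ≠ 0 := by positivity
  -- τ as cosines
  have hτcos : ∀ i : Fin (N+1), τ i = Real.cos (((N - (i:ℕ) : ℕ) : ℝ) * π / N) := by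
    intro i
    rw [hτ i, ← Real.cos_pi_sub]
    congr 1
    have hi : (i:ℕ) ≤ N := Nat.lt_succ_iff.mp i.isLt
    rw [Nat.cast_sub hi]
    field_simp
  -- injectivity
  have hmono : StrictMono τ := by
    intro i i' hii
    rw [hτ i, hτ i']
    apply neg_lt_neg
    have hle : ∀ r : Fin (N+1), (r:ℝ) * π / N ∈ Set.Icc 0 π := by
      intro r
      have hr : (r:ℝ) ≤ N := by exact_mod_cast Nat.lt_succ_iff.mp r.isLt
      constructor
      · positivity
      · rw [div_le_iff₀ hNR]
        nlinarith [Real.pi_pos]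
    have hlt : (i:ℝ) * π / N < (i':ℝ) * π / N := by
      have : (i:ℝ) < (i':ℝ) := by exact_mod_cast hii
      gcongr
    exact Real.strictAntiOn_cos (hle i) (hle i') hlt
  -- evaluation of T at the nodes
  have hTeval : ∀ (k : ℕ) (i : Fin (N+1)),
      (T ℝ (k:ℤ)).eval (τ i) = Real.cos ((k:ℝ) * (((N - (i:ℕ) : ℕ) : ℝ) * π / N)) := by
    intro k i
    rw [hτcos i, T_real_cos]
    norm_num
  -- the candidate polynomial
  set Q : Polynomial ℝ :=
    Polynomial.C (1 / (ρ j * N)) * T ℝ 0 +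
      (∑ k ∈ Finset.Icc 1 (N - 1),
        Polynomial.C (2 * (T ℝ (k : ℤ)).eval (τ j) / (ρ j * N)) * T ℝ (k : ℤ)) +
      Polynomial.C ((-1 : ℝ) ^ (N - (j : ℕ)) / (ρ j * N)) * T ℝ (N : ℤ) with hQ
  have hQdeg : Q.natDegree ≤ N := by
    rw [hQ]
    refine (natDegree_add_le _ _).trans (max_le ((natDegree_add_le _ _).trans (max_le ?_ ?_)) ?_)
    · exact (natDegree_C_mul_le _ _).trans (by simpa using (natDegree_T_le 0).trans (by omega))
    · refine natDegree_sum_le_of_forall_le _ _ ?_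
      intro k hk
      refine (natDegree_C_mul_le _ _).trans ((natDegree_T_le k).trans ?_)
      simp only [Finset.mem_Icc] at hk
      omega
    · exact (natDegree_C_mul_le _ _).trans (natDegree_T_le N)
  have hQτ : ∀ i, Q.eval (τ i) = if i = j then 1 else 0 := by
    intro i
    have hiN : (i:ℕ) ≤ N := Nat.lt_succ_iff.mp i.isLt
    set A : ℕ := N - (i:ℕ) with hA
    set B : ℕ := N - (j:ℕ) with hB
    have eN : ∀ r : Fin (N+1), (T ℝ (N:ℤ)).eval (τ r) = (-1:ℝ)^(N - (r:ℕ)) := by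
      intro r
      rw [hTeval N r]
      rw [show (N:ℝ) * (((N - (r:ℕ) : ℕ):ℝ) * π / N) = ((N - (r:ℕ) : ℕ):ℝ) * π by
        field_simp]
      exact cos_nat_pi _
    have key := ortho N hN A B (Nat.sub_le _ _) (Nat.sub_le _ _)
    have hQval : Q.eval (τ i)
        = (1 + (-1:ℝ)^(A + B) + 2 * ∑ k ∈ Finset.Icc 1 (N - 1),
            Real.cos ((k:ℝ) * ((A:ℝ) * π / N)) * Real.cos ((k:ℝ) * ((B:ℝ) * π / N)))
          / (ρ j * N) := by
      rw [hQ]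
      simp only [eval_add, eval_mul, eval_C, eval_finset_sum, eN, T_zero, eval_one]
      rw [eq_div_iff hd, add_mul, add_mul, Finset.sum_mul]
      have hsum : ∑ k ∈ Finset.Icc 1 (N-1),
          (2 * (T ℝ (k:ℤ)).eval (τ j) / (ρ j * N) * (T ℝ (k:ℤ)).eval (τ i)) * (ρ j * N)
          = 2 * ∑ k ∈ Finset.Icc 1 (N-1),
              Real.cos ((k:ℝ) * ((A:ℝ) * π / N)) * Real.cos ((k:ℝ) * ((B:ℝ) * π / N)) := by
        rw [Finset.mul_sum]
        refine Finset.sum_congr rfl ?_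
        intro k _
        rw [hTeval k i, hTeval k j, ← hA, ← hB]
        field_simp
      rw [hsum, pow_add, ← hA]
      set S := ∑ k ∈ Finset.Icc 1 (N-1), Real.cos ((k:ℝ) * ((A:ℝ) * π / N)) * Real.cos ((k:ℝ) * ((B:ℝ) * π / N)) with hS
      clear_value S
      field_simp
      ring
    rw [hQval, key]
    by_cases hij : i = j
    · subst hij
      rw [if_pos rfl, if_pos rfl]
      by_cases h0 : A = 0 ∨ A = N
      · rw [if_pos h0]
        have : ρ i = 2 := by
          rw [hρj]
          rw [if_pos (by omega)]
        rw [this]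
        field_simp
      · rw [if_neg h0]
        have : ρ i = 1 := by
          rw [hρj, if_neg (by omega)]
        rw [this]
        field_simp
    · rw [if_neg hij]
      have hAB : A ≠ B := by
        have : (i:ℕ) ≠ (j:ℕ) := fun h => hij (Fin.ext h)
        omega
      rw [if_neg hAB]
      simp
  -- conclude ℓ j = Q
  have hsub : ℓ j - Q = 0 := by
    apply Polynomial.eq_zero_of_natDegree_lt_card_of_eval_eq_zero _ hmono.injective
    · intro i
      rw [eval_sub, hval i j, hQτ i, sub_self]
    · refine lt_of_le_of_lt ((natDegree_sub_le _ _).trans (max_le (hdeg j) hQdeg)) ?_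
      simp
  have hlQ : ℓ j = Q := by
    have := sub_eq_zero.mp hsub
    exact this
  rw [hlQ, hQ]
  simp [eval_finset_sum]
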